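/- Let 𝔤 be a nonabelian finite simple Lie algebra over 𝔽_p of dimension d, and let A be a generating set. Suppose for some k the set A^k contains the X-multiples of a nonzero vector v, where X = {α ∈ 𝔽_p : αv ∈ A^k}. Then the set A^{2k+d} contains both (X+X)·v and (X·X)·w for some nonzero vector w ∈ 𝔤; consequently ℓ(A^{2k+d}) ≥ max{|X+X|, |X·X|}, where ℓ(S) denotes the maximum number of elements of S lying on a single line through the origin. -/

import Mathlib

variable {L : Type*} [LieRing L]

/-- The ball `A^k`: `A^1 = {0} ∪ A`,
`A^k = ⋃_{0<j<k} ((A^j + A^{k-j}) ∪ [A^j, A^{k-j}])`. -/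
def ball (A : Set L) : ℕ → Set L
  | 0 => ∅
  | 1 => insert 0 A
  | (n + 2) =>
      ⋃ (j : ℕ) (_ : 0 < j) (_ : j < n + 2),
        (Set.image2 (· + ·) (ball A j) (ball A (n + 2 - j)) ∪
          Set.image2 (fun x y => ⁅x, y⁆) (ball A j) (ball A (n + 2 - j)))
  termination_by k => k
  decreasing_by all_goals omega

lemma union_subset_ball (A : Set L) {j k : ℕ} (h1 : 0 < j) (h2 : j < k) :
    (Set.image2 (· + ·) (ball A j) (ball A (k - j)) ∪
      Set.image2 (fun x y => ⁅x, y⁆) (ball A j) (ball A (k - j))) ⊆ ball A k := by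
  obtain ⟨n, rfl⟩ : ∃ n, k = n + 2 := ⟨k - 2, by omega⟩
  rw [ball]
  intro x hx
  exact Set.mem_iUnion.2 ⟨j, Set.mem_iUnion.2 ⟨h1, Set.mem_iUnion.2 ⟨h2, hx⟩⟩⟩

lemma add_mem_ball {A : Set L} {m n : ℕ} (hm : 0 < m) (hn : 0 < n)
    {x y : L} (hx : x ∈ ball A m) (hy : y ∈ ball A n) : x + y ∈ ball A (m + n) := by
  apply union_subset_ball A hm (by omega : m < m + n)
  left
  have h : m + n - m = n := by omega
  rw [h]
  exact ⟨x, hx, y, hy, rfl⟩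

lemma lie_mem_ball {A : Set L} {m n : ℕ} (hm : 0 < m) (hn : 0 < n)
    {x y : L} (hx : x ∈ ball A m) (hy : y ∈ ball A n) : ⁅x, y⁆ ∈ ball A (m + n) := by
  apply union_subset_ball A hm (by omega : m < m + n)
  right
  have h : m + n - m = n := by omega
  rw [h]
  exact ⟨x, hx, y, hy, rfl⟩

lemma zero_mem_ball {A : Set L} : ∀ {n : ℕ}, 0 < n → (0 : L) ∈ ball A n := by
  intro n
  induction n with
  | zero => omega
  | succ m ih =>
    intro _
    rcases Nat.eq_zero_or_pos m with rfl | hm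
    · rw [ball]; exact Set.mem_insert 0 A
    · have := add_mem_ball hm Nat.one_pos (ih hm) (by rw [ball]; exact Set.mem_insert 0 A)
      simpa using this

lemma ball_mono {A : Set L} : ∀ {m n : ℕ}, m ≤ n → ball A m ⊆ ball A n := by
  intro m n h
  induction n with
  | zero => have h0 : m = 0 := by omega
            subst h0; exact subset_rfl
  | succ n ih =>
    rcases Nat.lt_or_ge m (n+1) with h' | h'
    · intro x hx
      have hx' : x ∈ ball A n := ih (by omega) hx
      have hn : 0 < n := by
        rcases Nat.eq_zero_or_pos n with rfl | hn
        · simp [ball] at hx'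
        · exact hn
      have := add_mem_ball hn Nat.one_pos hx' (zero_mem_ball Nat.one_pos)
      simpa using this
    · have h0 : m = n + 1 := by omega
      subst h0; exact subset_rfl

/-- If `A^k` contains the `X`-multiples of a nonzero `v`, where
`X = {α : αv ∈ A^k}`, then `A^{2k+d}` contains `(X+X)·v` and `(X·X)·w` for some nonzero `w`;
consequently some line through the origin meets `A^{2k+d}` in at least
`max {|X+X|, |X·X|}` points. -/
theorem stmt17 (p : ℕ) [Fact p.Prime] [LieAlgebra (ZMod p) L] [Module.Finite (ZMod p) L]
    [LieAlgebra.IsSimple (ZMod p) L]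
    (A : Set L) (hA : LieSubalgebra.lieSpan (ZMod p) L A = ⊤)
    (k : ℕ) (v : L) (hv : v ≠ 0)
    (X : Set (ZMod p)) (hX : X = {α : ZMod p | α • v ∈ ball A k}) :
    (∃ w : L, w ≠ 0 ∧
      (∀ α ∈ Set.image2 (· + ·) X X,
        α • v ∈ ball A (2 * k + Module.finrank (ZMod p) L)) ∧
      (∀ β ∈ Set.image2 (· * ·) X X,
        β • w ∈ ball A (2 * k + Module.finrank (ZMod p) L))) ∧
    (∃ u : L, u ≠ 0 ∧
      max (Set.image2 (· + ·) X X).ncard (Set.image2 (· * ·) X X).ncard ≤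
        ((ball A (2 * k + Module.finrank (ZMod p) L)) ∩
          Set.range (fun α : ZMod p => α • u)).ncard) := by
  classical
  haveI : NeZero p := ⟨(Fact.out : p.Prime).ne_zero⟩
  set d := Module.finrank (ZMod p) L with hd
  -- "good" elements of level m : scalar multiples land in balls
  set G : ℕ → Set L :=
    fun m => {x | ∀ β : ZMod p, β • v ∈ ball A k → β • x ∈ ball A (k + m)} with hGdef
  set W : ℕ → Submodule (ZMod p) L := fun m => Submodule.span (ZMod p) (G m) with hWdef
  have hGv : v ∈ G 0 := fun β hb => by simpa using hb
  have hGmono : ∀ m, G m ⊆ G (m+1) := fun m x hx β hb => ball_mono (by omega) (hx β hb)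
  have hWmono : Monotone W :=
    monotone_nat_of_le_succ fun m => Submodule.span_mono (hGmono m)
  have hGlie : ∀ m, ∀ a ∈ A, ∀ x ∈ G m, ⁅a, x⁆ ∈ G (m+1) := by
    intro m a ha x hx β hβ
    have hk : 0 < k := by
      by_contra h
      have h0 : k = 0 := by omega
      rw [h0] at hβ
      simp [ball] at hβ
    have h1 : a ∈ ball A 1 := by rw [ball]; exact Set.mem_insert_of_mem _ ha
    have h2 : β • x ∈ ball A (k + m) := hx β hβ
    have h3 := lie_mem_ball Nat.one_pos (by omega : 0 < k + m) h1 h2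
    have h4 : 1 + (k + m) = k + (m + 1) := by omega
    rw [h4] at h3
    simpa [lie_smul] using h3
  have hWlie : ∀ m, ∀ a ∈ A, ∀ y ∈ W m, ⁅a, y⁆ ∈ W (m+1) := by
    intro m a ha y hy
    induction hy using Submodule.span_induction with
    | mem x hx => exact Submodule.subset_span (hGlie m a ha x hx)
    | zero => rw [lie_zero]; exact (W (m+1)).zero_mem
    | add x y _ _ hx hy => rw [lie_add]; exact (W (m+1)).add_mem hx hy
    | smul c x _ hx => rw [lie_smul]; exact (W (m+1)).smul_mem c hx
  -- tower stabilizes at or before d, giving W d = ⊤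
  have hWv : v ∈ W 0 := Submodule.subset_span hGv
  have hstab : ∃ m, m < d ∧ W (m+1) ≤ W m := by
    by_contra h
    push_neg at h
    have hlt : ∀ m, m < d → W m < W (m+1) := fun m hm =>
      lt_of_le_of_ne (hWmono (Nat.le_succ m)) (fun he => (h m hm) he.ge)
    have hrank : ∀ m, m ≤ d → m + 1 ≤ Module.finrank (ZMod p) (W m) := by
      intro m
      induction m with
      | zero =>
        intro _
        have hne : W 0 ≠ ⊥ := by
          intro hb
          rw [hb] at hWv
          exact hv (by simpa using hWv)
        have hbot : (⊥ : Submodule (ZMod p) L) < W 0 := hne.bot_lt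
        have := Submodule.finrank_lt_finrank_of_lt hbot
        rw [finrank_bot] at this
        omega
      | succ m ih =>
        intro hm
        have h1 := ih (by omega)
        have h2 := Submodule.finrank_lt_finrank_of_lt (hlt m (by omega))
        omega
    have h1 := hrank d le_rfl
    have h2 := Submodule.finrank_le (W d)
    omega
  obtain ⟨m, hmd, hstabm⟩ := hstab
  have hWeq : W m = W (m+1) := le_antisymm (hWmono (Nat.le_succ m)) hstabm
  -- the normalizer of W m is a Lie subalgebra containing A, so W m is an ideal
  have hNall : ∀ z : L, ∀ y ∈ W m, ⁅z, y⁆ ∈ W m := by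
    set N : LieSubalgebra (ZMod p) L :=
      { carrier := {z : L | ∀ y ∈ W m, ⁅z, y⁆ ∈ W m}
        add_mem' := fun hz1 hz2 y hy => by
          rw [add_lie]; exact (W m).add_mem (hz1 y hy) (hz2 y hy)
        zero_mem' := fun y hy => by rw [zero_lie]; exact (W m).zero_mem
        smul_mem' := fun c z hz y hy => by
          rw [smul_lie]; exact (W m).smul_mem c (hz y hy)
        lie_mem' := fun {z1 z2} h1 h2 y hy => by
          rw [lie_lie]; exact (W m).sub_mem (h1 _ (h2 y hy)) (h2 _ (h1 y hy)) } with hNdef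
    have hAN : A ⊆ N := by
      intro a ha y hy
      rw [hWeq]
      exact hWlie m a ha y hy
    have htop : LieSubalgebra.lieSpan (ZMod p) L A ≤ N :=
      (LieSubalgebra.lieSpan_le).2 hAN
    rw [hA] at htop
    intro z y hy
    exact htop (LieSubalgebra.mem_top z) y hy
  have hWmTop : W m = ⊤ := by
    set I : LieIdeal (ZMod p) L :=
      { W m with lie_mem := fun {z y} hy => hNall z y hy } with hIdef
    have hIbot : I ≠ ⊥ := by
      intro hb
      have : v ∈ I := hWmono (Nat.zero_le m) hWv
      rw [hb] at this
      exact hv (by simpa using this)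
    have hItop : I = ⊤ := (LieAlgebra.IsSimple.eq_bot_or_eq_top I).resolve_left hIbot
    ext x
    simp only [Submodule.mem_top, iff_true]
    have : x ∈ I := by rw [hItop]; trivial
    exact this
  have hWd : W d = ⊤ := by
    rw [eq_top_iff, ← hWmTop]
    exact hWmono (by omega)
  -- v is not central, so some good element x of level d has ⁅v, x⁆ ≠ 0
  have hcen : ∃ z : L, ⁅v, z⁆ ≠ 0 := by
    by_contra h
    push_neg at h
    have hvc : v ∈ LieAlgebra.center (ZMod p) L := by
      rw [LieModule.mem_maxTrivSubmodule]
      intro x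
      rw [← lie_skew, h x, neg_zero]
    rw [LieAlgebra.center_eq_bot] at hvc
    exact hv (by simpa using hvc)
  obtain ⟨z, hz⟩ := hcen
  have hGx : ∃ x ∈ G d, ⁅v, x⁆ ≠ 0 := by
    by_contra h
    push_neg at h
    have hker : W d ≤ LinearMap.ker (LieAlgebra.ad (ZMod p) L v) := by
      apply Submodule.span_le.2
      intro x hx
      simp only [LinearMap.mem_ker, LieAlgebra.ad_apply, SetLike.mem_coe]
      exact h x hx
    have hzW : z ∈ W d := by rw [hWd]; trivial
    have := hker hzW
    simp only [LinearMap.mem_ker, LieAlgebra.ad_apply] at this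
    exact hz this
  obtain ⟨x, hxG, hw0⟩ := hGx
  -- the two ball-membership claims
  have hsum : ∀ α ∈ Set.image2 (· + ·) X X, α • v ∈ ball A (2 * k + d) := by
    rintro α ⟨a, ha, b, hb, rfl⟩
    rw [hX] at ha hb
    have hk : 0 < k := by
      by_contra hk0
      have h0 : k = 0 := by omega
      rw [h0] at ha
      simp [ball] at ha
    have := add_mem_ball hk hk ha hb
    rw [add_smul]
    exact ball_mono (by omega) this
  have hprod : ∀ β ∈ Set.image2 (· * ·) X X, β • ⁅v, x⁆ ∈ ball A (2 * k + d) := by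
    rintro β ⟨a, ha, b, hb, rfl⟩
    rw [hX] at ha hb
    have hk : 0 < k := by
      by_contra hk0
      have h0 : k = 0 := by omega
      rw [h0] at ha
      simp [ball] at ha
    have hbx : b • x ∈ ball A (k + d) := hxG b hb
    have h1 : ⁅a • v, b • x⁆ ∈ ball A (k + (k + d)) :=
      lie_mem_ball hk (by omega) ha hbx
    have h2 : ⁅a • v, b • x⁆ = (a * b) • ⁅v, x⁆ := by
      rw [smul_lie, lie_smul, ← mul_smul]
    rw [← h2]
    exact ball_mono (by omega) h1
  -- cardinality helper
  have hcard : ∀ u : L, u ≠ 0 → ∀ S : Set (ZMod p),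
      (∀ s ∈ S, s • u ∈ ball A (2 * k + d)) →
      S.ncard ≤ ((ball A (2 * k + d)) ∩ Set.range (fun α : ZMod p => α • u)).ncard := by
    intro u hu S hS
    have hfin : ((ball A (2 * k + d)) ∩ Set.range (fun α : ZMod p => α • u)).Finite :=
      (Set.finite_range _).subset Set.inter_subset_right
    calc S.ncard = ((fun α : ZMod p => α • u) '' S).ncard :=
          (Set.ncard_image_of_injective _ (smul_left_injective (ZMod p) hu)).symm
      _ ≤ _ := Set.ncard_le_ncard
          (by rintro _ ⟨s, hs, rfl⟩; exact ⟨hS s hs, ⟨s, rfl⟩⟩) hfin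
  refine ⟨⟨⁅v, x⁆, hw0, hsum, hprod⟩, ?_⟩
  rcases le_total (Set.image2 (· * ·) X X).ncard (Set.image2 (· + ·) X X).ncard with hle | hle
  · refine ⟨v, hv, ?_⟩
    rw [max_eq_left hle]
    exact hcard v hv _ hsum
  · refine ⟨⁅v, x⁆, hw0, ?_⟩
    rw [max_eq_right hle]
    exact hcard ⁅v, x⁆ hw0 _ hprod
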